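/- Let γ : (0,∞) → ℝ³ be the conical loxodrome γ(s) = (s/4)·(cos m(s), √3, sin m(s)) with m(s) = 2√3·log(s/4). Then the curvature of γ is κ(s) = ‖γ''(s)‖ = √39/(2s) for all s > 0. -/

import Mathlib

noncomputable section

def mfun (s : ℝ) : ℝ := 2 * Real.sqrt 3 * Real.log (s / 4)

def V (s : ℝ) : Fin 3 → ℝ :=
  ![Real.cos (mfun s) / 4 - Real.sqrt 3 / 2 * Real.sin (mfun s),
    Real.sqrt 3 / 4,
    Real.sin (mfun s) / 4 + Real.sqrt 3 / 2 * Real.cos (mfun s)]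

def W (s : ℝ) : Fin 3 → ℝ :=
  ![(2 * Real.sqrt 3 / s) * (-(Real.sin (mfun s)) / 4 - Real.sqrt 3 / 2 * Real.cos (mfun s)),
    0,
    (2 * Real.sqrt 3 / s) * (Real.cos (mfun s) / 4 - Real.sqrt 3 / 2 * Real.sin (mfun s))]

abbrev eqv : EuclideanSpace ℝ (Fin 3) ≃L[ℝ] (Fin 3 → ℝ) :=
  PiLp.continuousLinearEquiv 2 ℝ (fun _ : Fin 3 => ℝ)

lemma cle_hasDerivAt {f : ℝ → (Fin 3 → ℝ)} {g : ℝ → EuclideanSpace ℝ (Fin 3)}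
    (hg : ∀ t, g t = eqv.symm (f t)) {v : Fin 3 → ℝ} {s : ℝ}
    (h : HasDerivAt f v s) : HasDerivAt g (eqv.symm v) s := by
  have h2 := (eqv.symm.toContinuousLinearMap.hasFDerivAt (x := f s)).comp_hasDerivAt s h
  have : g = fun t => eqv.symm (f t) := funext hg
  rw [this]
  exact h2

lemma hm {s : ℝ} (hs : 0 < s) : HasDerivAt mfun (2 * Real.sqrt 3 / s) s := by
  have h1 : HasDerivAt (fun t : ℝ => t / 4) (1 / 4) s := (hasDerivAt_id s).div_const 4
  have h2 := (Real.hasDerivAt_log (by positivity : (0:ℝ) < s / 4).ne').comp s h1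
  have h3 := h2.const_mul (2 * Real.sqrt 3)
  refine h3.congr_deriv ?_
  field_simp

lemma hcos {s : ℝ} (hs : 0 < s) :
    HasDerivAt (fun t => Real.cos (mfun t)) (-Real.sin (mfun s) * (2 * Real.sqrt 3 / s)) s :=
  (Real.hasDerivAt_cos (mfun s)).comp s (hm hs)

lemma hsin {s : ℝ} (hs : 0 < s) :
    HasDerivAt (fun t => Real.sin (mfun t)) (Real.cos (mfun s) * (2 * Real.sqrt 3 / s)) s :=
  (Real.hasDerivAt_sin (mfun s)).comp s (hm hs)

lemma hGamma (γ : ℝ → EuclideanSpace ℝ (Fin 3))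
    (hγ0 : ∀ s : ℝ, γ s 0 = s / 4 * Real.cos (2 * Real.sqrt 3 * Real.log (s / 4)))
    (hγ1 : ∀ s : ℝ, γ s 1 = s / 4 * Real.sqrt 3)
    (hγ2 : ∀ s : ℝ, γ s 2 = s / 4 * Real.sin (2 * Real.sqrt 3 * Real.log (s / 4)))
    {s : ℝ} (hs : 0 < s) : HasDerivAt γ (eqv.symm (V s)) s := by
  apply cle_hasDerivAt (f := fun t => ![t/4 * Real.cos (mfun t), t/4 * Real.sqrt 3,
      t/4 * Real.sin (mfun t)])
  · intro t
    ext i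
    fin_cases i <;>
      simp [hγ0 t, hγ1 t, hγ2 t, mfun]
  · rw [hasDerivAt_pi]
    intro i
    fin_cases i
    · have := ((hasDerivAt_id s).div_const 4).mul (hcos hs)
      refine this.congr_deriv ?_
      simp only [V]
      simp
      field_simp
      ring
    · have := ((hasDerivAt_id s).div_const 4).mul_const (Real.sqrt 3)
      refine this.congr_deriv ?_
      simp only [V]
      simp
      ring
    · have := ((hasDerivAt_id s).div_const 4).mul (hsin hs)
      refine this.congr_deriv ?_
      simp only [V]
      simp
      field_simp
      ring

lemma hVd {s : ℝ} (hs : 0 < s) :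
    HasDerivAt (fun t => eqv.symm (V t)) (eqv.symm (W s)) s := by
  apply cle_hasDerivAt (f := V) (fun t => rfl)
  rw [hasDerivAt_pi]
  intro i
  fin_cases i
  · have := ((hcos hs).div_const 4).sub ((hsin hs).const_mul (Real.sqrt 3 / 2))
    refine this.congr_deriv ?_
    simp only [W]
    simp
    field_simp
  · have := hasDerivAt_const s (Real.sqrt 3 / 4)
    refine this.congr_deriv ?_
    simp [W]
  · have := ((hsin hs).div_const 4).add ((hcos hs).const_mul (Real.sqrt 3 / 2))
    refine this.congr_deriv ?_
    simp only [W]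
    simp
    field_simp
    ring

end

/-- The conical loxodrome has curvature `κ(s) = √39/(2s)` for `s > 0`. -/
theorem loxodrome_curvature (γ : ℝ → EuclideanSpace ℝ (Fin 3))
    (hγ0 : ∀ s : ℝ, γ s 0 = s / 4 * Real.cos (2 * Real.sqrt 3 * Real.log (s / 4)))
    (hγ1 : ∀ s : ℝ, γ s 1 = s / 4 * Real.sqrt 3)
    (hγ2 : ∀ s : ℝ, γ s 2 = s / 4 * Real.sin (2 * Real.sqrt 3 * Real.log (s / 4))) :
    ∀ s : ℝ, 0 < s → ‖deriv (deriv γ) s‖ = Real.sqrt 39 / (2 * s) := by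
  intro s hs
  have h1 : deriv γ =ᶠ[nhds s] fun t => eqv.symm (V t) := by
    filter_upwards [eventually_gt_nhds hs] with t ht
    exact (hGamma γ hγ0 hγ1 hγ2 ht).deriv
  rw [h1.deriv_eq, (hVd hs).deriv]
  have hx : ∀ (v : Fin 3 → ℝ) (i : Fin 3), (eqv.symm v : EuclideanSpace ℝ (Fin 3)) i = v i :=
    fun _ _ => rfl
  rw [EuclideanSpace.norm_eq]
  simp only [hx, Fin.sum_univ_three, W, Matrix.cons_val_zero, Matrix.cons_val_one,
    Matrix.head_cons, Matrix.cons_val_two, Matrix.tail_cons, Real.norm_eq_abs, sq_abs]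
  set q := Real.sqrt 3 with hq
  set si := Real.sin (mfun s) with hsi
  set c := Real.cos (mfun s) with hc
  have pyth : si ^ 2 + c ^ 2 = 1 := Real.sin_sq_add_cos_sq _
  have h3 : q ^ 2 = 3 := Real.sq_sqrt (by norm_num)
  have h39 : Real.sqrt 39 ^ 2 = 39 := Real.sq_sqrt (by norm_num)
  have key : (2*q/s * (-si/4 - q/2*c))^2 + 0^2 + (2*q/s*(c/4 - q/2*si))^2
      = (Real.sqrt 39/(2*s))^2 := by
    have hP : (-si/4 - q/2*c)^2 + (c/4 - q/2*si)^2 = 13/16 := by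
      linear_combination (13/16) * pyth + ((si^2+c^2)/4) * h3
    have e1 : (2*q/s * (-si/4 - q/2*c))^2 + 0^2 + (2*q/s*(c/4 - q/2*si))^2
        = (2*q/s)^2 * ((-si/4 - q/2*c)^2 + (c/4 - q/2*si)^2) := by ring
    rw [e1, hP, div_pow, div_pow, mul_pow, mul_pow, h3, h39]
    ring
  rw [key, Real.sqrt_sq (by positivity)]
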